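/- Let μ be a deficient topological measure on a locally compact Hausdorff space X such that μ takes only finitely many values, μ(X) < ∞, and μ is not a topological measure, in the sense that there exist an open set U and a compact set C ⊆ U with μ(C) + μ(U \ C) < μ(U). Then there exists a continuous compactly supported function f ≥ 0 on X such that ∫_X f dμ = 0 while ∫_X (−f) dμ < 0; explicitly, ∫₀^∞ μ(f⁻¹((t,∞))) dt = 0 while aμ(X) + ∫_a^0 μ((−f)⁻¹((t,∞))) dt < 0, where a = −max_{x∈X} f(x). -/

import Mathlib

open MeasureTheory Set Filter Topology ENNReal

/-- A deficient topological measure on a topological space `X`: a set function with values in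
`[0,∞]` (recorded on all sets, but constrained only on open and closed sets) that is finitely
additive on disjoint compact sets, inner regular on open sets with respect to compact sets,
and outer regular on closed sets with respect to open sets. -/
structure DeficientTopologicalMeasure (X : Type*) [TopologicalSpace X] where
  m : Set X → ℝ≥0∞
  additive : ∀ ⦃C K : Set X⦄, IsCompact C → IsCompact K → Disjoint C K →
    m (C ∪ K) = m C + m K
  innerRegular : ∀ ⦃U : Set X⦄, IsOpen U →
    m U = ⨆ (K : Set X) (_ : IsCompact K) (_ : K ⊆ U), m K
  outerRegular : ∀ ⦃F : Set X⦄, IsClosed F →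
    m F = ⨅ (U : Set X) (_ : IsOpen U) (_ : F ⊆ U), m U

namespace DeficientTopologicalMeasure

variable {X : Type*} [TopologicalSpace X] (μ : DeficientTopologicalMeasure X)

/-- Monotonicity: compact inside open. -/
lemma mono_co {K W : Set X} (hK : IsCompact K) (hW : IsOpen W) (hKW : K ⊆ W) :
    μ.m K ≤ μ.m W := by
  rw [μ.innerRegular hW]
  exact le_iSup_of_le K (le_iSup_of_le hK (le_iSup_of_le hKW le_rfl))

/-- Monotonicity: open inside open. -/
lemma mono_oo {W W' : Set X} (hW : IsOpen W) (hW' : IsOpen W') (h : W ⊆ W') :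
    μ.m W ≤ μ.m W' := by
  rw [μ.innerRegular hW]
  exact iSup_le fun K => iSup_le fun hK => iSup_le fun hKW =>
    μ.mono_co hK hW' (hKW.trans h)

/-- Monotonicity: closed inside open. -/
lemma mono_clo {F W : Set X} (hF : IsClosed F) (hW : IsOpen W) (h : F ⊆ W) :
    μ.m F ≤ μ.m W := by
  rw [μ.outerRegular hF]
  exact iInf_le_of_le W (iInf_le_of_le hW (iInf_le_of_le h le_rfl))

/-- Monotonicity: compact inside compact (Hausdorff). -/
lemma mono_cc [T2Space X] {K K' : Set X} (hK : IsCompact K) (hK' : IsCompact K')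
    (h : K ⊆ K') : μ.m K ≤ μ.m K' := by
  rw [μ.outerRegular hK'.isClosed]
  exact le_iInf fun W => le_iInf fun hW => le_iInf fun hW' =>
    μ.mono_co hK hW (h.trans hW')

/-- With finitely many values, the supremum in inner regularity is attained. -/
lemma attain_inner (hfin : (μ.m '' {A : Set X | IsOpen A ∨ IsClosed A}).Finite)
    [T2Space X] {W : Set X} (hW : IsOpen W) :
    ∃ A : Set X, IsCompact A ∧ A ⊆ W ∧ μ.m A = μ.m W := by
  set S : Set ℝ≥0∞ := {v | ∃ A : Set X, IsCompact A ∧ A ⊆ W ∧ μ.m A = v} with hS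
  have hne : S.Nonempty := ⟨μ.m ∅, ∅, isCompact_empty, empty_subset _, rfl⟩
  have hsub : S ⊆ μ.m '' {A : Set X | IsOpen A ∨ IsClosed A} := by
    rintro v ⟨A, hA, _, rfl⟩
    exact ⟨A, Or.inr hA.isClosed, rfl⟩
  have hWS : μ.m W = sSup S := by
    rw [μ.innerRegular hW]
    apply le_antisymm
    · exact iSup_le fun A => iSup_le fun hA => iSup_le fun hAW => le_sSup ⟨A, hA, hAW, rfl⟩
    · refine sSup_le ?_
      rintro v ⟨A, hA, hAW, rfl⟩
      exact le_iSup_of_le A (le_iSup_of_le hA (le_iSup_of_le hAW le_rfl))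
  obtain ⟨A, hA, hAW, hval⟩ := hne.csSup_mem (hfin.subset hsub)
  exact ⟨A, hA, hAW, by rw [hval, hWS]⟩

/-- With finitely many values, the infimum in outer regularity is attained. -/
lemma attain_outer (hfin : (μ.m '' {A : Set X | IsOpen A ∨ IsClosed A}).Finite)
    {F : Set X} (hF : IsClosed F) :
    ∃ W : Set X, IsOpen W ∧ F ⊆ W ∧ μ.m W = μ.m F := by
  set S : Set ℝ≥0∞ := {v | ∃ W : Set X, IsOpen W ∧ F ⊆ W ∧ μ.m W = v} with hS
  have hne : S.Nonempty := ⟨μ.m univ, univ, isOpen_univ, subset_univ _, rfl⟩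
  have hsub : S ⊆ μ.m '' {A : Set X | IsOpen A ∨ IsClosed A} := by
    rintro v ⟨W, hW, _, rfl⟩
    exact ⟨W, Or.inl hW, rfl⟩
  have hFS : μ.m F = sInf S := by
    rw [μ.outerRegular hF]
    apply le_antisymm
    · refine le_sInf ?_
      rintro v ⟨W, hW, hFW, rfl⟩
      exact iInf_le_of_le W (iInf_le_of_le hW (iInf_le_of_le hFW le_rfl))
    · exact le_iInf fun W => le_iInf fun hW => le_iInf fun hFW => sInf_le ⟨W, hW, hFW, rfl⟩
  obtain ⟨W, hW, hFW, hval⟩ := hne.csInf_mem (hfin.subset hsub)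
  exact ⟨W, hW, hFW, by rw [hval, hFS]⟩

/-- If a compact `A` realizes the value of an open `W ⊇ A` (finite value), then every
compact subset of `W` disjoint from `A` is null. -/
lemma nullIn {A W M : Set X} (hA : IsCompact A) (hW : IsOpen W) (hAW : A ⊆ W)
    (hval : μ.m W = μ.m A) (hfin : μ.m A ≠ ∞) (hM : IsCompact M) (hMW : M ⊆ W)
    (hMA : Disjoint M A) : μ.m M = 0 := by
  have h := μ.additive hM hA hMA
  have hle : μ.m (M ∪ A) ≤ μ.m A :=
    hval ▸ μ.mono_co (hM.union hA) hW (union_subset hMW hAW)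
  rw [h] at hle
  have h0 : μ.m M + μ.m A ≤ 0 + μ.m A := by simpa using hle
  exact le_antisymm ((ENNReal.add_le_add_iff_right hfin).mp h0) zero_le

/-- Shell splitting: if compact `P` avoids the shell `L \ interior L` of a compact `L`,
then `μ P = μ (P ∩ L) + μ (P \ interior L)`. -/
lemma shell_split [T2Space X] {P L : Set X} (hP : IsCompact P) (hL : IsCompact L)
    (hdisj : Disjoint P (L \ interior L)) :
    μ.m P = μ.m (P ∩ L) + μ.m (P \ interior L) := by
  have h1 : IsCompact (P ∩ L) := hP.inter_right hL.isClosed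
  have h2 : IsCompact (P \ interior L) := hP.diff isOpen_interior
  have hd : Disjoint (P ∩ L) (P \ interior L) := by
    rw [Set.disjoint_left]
    rintro x ⟨hxP, hxL⟩ ⟨_, hxni⟩
    exact (Set.disjoint_left.mp hdisj) hxP ⟨hxL, hxni⟩
  have hcover : P = (P ∩ L) ∪ (P \ interior L) := by
    ext x
    constructor
    · intro hx
      by_cases h : x ∈ interior L
      · exact Or.inl ⟨hx, interior_subset h⟩
      · exact Or.inr ⟨hx, h⟩
    · rintro (⟨h, -⟩ | ⟨h, -⟩) <;> exact h
  calc μ.m P = μ.m ((P ∩ L) ∪ (P \ interior L)) := by rw [← hcover]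
    _ = μ.m (P ∩ L) + μ.m (P \ interior L) := μ.additive h1 h2 hd

end DeficientTopologicalMeasure

/-- Let `μ` be a deficient topological measure on a locally compact Hausdorff
space that takes only finitely many values on open and closed sets, with `μ(X) < ∞`, and
which is not a topological measure: there are an open `U` and a compact `C ⊆ U` with
`μ(C) + μ(U \ C) < μ(U)`. Then there is a continuous compactly supported `f ≥ 0` with
`∫_X f dμ = 0` but `∫_X (−f) dμ < 0`; explicitly `∫₀^∞ μ(f⁻¹((t,∞))) dt = 0` while
`aμ(X) + ∫_a^0 μ((−f)⁻¹((t,∞))) dt < 0`, where `a = −sup f`. -/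
theorem stmt16 {X : Type*} [TopologicalSpace X] [LocallyCompactSpace X] [T2Space X]
    (μ : DeficientTopologicalMeasure X)
    (hfinval : (μ.m '' {A : Set X | IsOpen A ∨ IsClosed A}).Finite)
    (hμfin : μ.m univ < ∞)
    (hnottm : ∃ (U C : Set X), IsOpen U ∧ IsCompact C ∧ C ⊆ U ∧
      μ.m C + μ.m (U \ C) < μ.m U) :
    ∃ f : X → ℝ, Continuous f ∧ HasCompactSupport f ∧ (∀ x, 0 ≤ f x) ∧
      (∫⁻ t in Ioi (0 : ℝ), μ.m (f ⁻¹' (Ioi t))) = 0 ∧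
      (-(⨆ x, f x)) * (μ.m univ).toReal +
        (∫ t in (-(⨆ x, f x))..(0 : ℝ),
          (μ.m ((fun x => -f x) ⁻¹' (Ioi t))).toReal) < 0 := by
  classical
  obtain ⟨Uo, Co, hUo, hCo, hCoU, hlt⟩ := hnottm
  have hm_ne : μ.m univ ≠ ∞ := hμfin.ne
  have hUoFin : μ.m Uo ≠ ∞ :=
    ((μ.mono_oo hUo isOpen_univ (subset_univ _)).trans_lt hμfin).ne
  -- saturate U \ C
  have hWo : IsOpen (Uo \ Co) := hUo.sdiff hCo.isClosed
  obtain ⟨Lsat, hLsat, hLsatW, hLsatval⟩ := μ.attain_inner hfinval hWo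
  -- B := C ∪ Lsat
  set B : Set X := Co ∪ Lsat with hBdef
  have hBc : IsCompact B := hCo.union hLsat
  have hBU : B ⊆ Uo := union_subset hCoU (hLsatW.trans diff_subset)
  have hdisjCL : Disjoint Co Lsat :=
    Set.disjoint_left.mpr fun {x} hxC hxL => (hLsatW hxL).2 hxC
  have hBval : μ.m B = μ.m Co + μ.m (Uo \ Co) := by
    rw [μ.additive hCo hLsat hdisjCL, hLsatval]
  have hBfin : μ.m B ≠ ∞ :=
    ((μ.mono_co hBc isOpen_univ (subset_univ _)).trans_lt hμfin).ne
  -- an open set OB ⊆ U around B with the same value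
  obtain ⟨O₀, hO₀, hBO₀, hO₀val⟩ := μ.attain_outer hfinval hBc.isClosed
  set OB : Set X := O₀ ∩ Uo with hOBdef
  have hOB : IsOpen OB := hO₀.inter hUo
  have hBOB : B ⊆ OB := subset_inter hBO₀ hBU
  have hOBU : OB ⊆ Uo := inter_subset_right
  have hOBval : μ.m OB = μ.m B :=
    le_antisymm (le_trans (μ.mono_oo hOB hO₀ inter_subset_left) hO₀val.le)
      (μ.mono_clo hBc.isClosed hOB hBOB)
  -- shell compact L₁ around B inside OB
  obtain ⟨L₁, hL₁, hBint₁, hL₁OB⟩ := exists_compact_between hBc hOB hBOB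
  -- compact D' ⊆ U of full U-value containing L₁
  obtain ⟨D₀, hD₀, hD₀U, hD₀val⟩ := μ.attain_inner hfinval hUo
  set D' : Set X := D₀ ∪ L₁ with hD'def
  have hD'c : IsCompact D' := hD₀.union hL₁
  have hD'U : D' ⊆ Uo := union_subset hD₀U (hL₁OB.trans hOBU)
  have hD'val : μ.m D' = μ.m Uo :=
    le_antisymm (μ.mono_co hD'c hUo hD'U)
      (hD₀val ▸ μ.mono_cc hD₀ hD'c subset_union_left)
  have hD'fin : μ.m D' ≠ ∞ := by rw [hD'val]; exact hUoFin
  -- an open set OD ⊆ U around D' with the same value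
  obtain ⟨O₁', hO₁', hD'O₁', hO₁'val⟩ := μ.attain_outer hfinval hD'c.isClosed
  set OD : Set X := O₁' ∩ Uo with hODdef
  have hOD : IsOpen OD := hO₁'.inter hUo
  have hD'OD : D' ⊆ OD := subset_inter hD'O₁' hD'U
  have hODU : OD ⊆ Uo := inter_subset_right
  have hODval : μ.m OD = μ.m D' :=
    le_antisymm (le_trans (μ.mono_oo hOD hO₁' inter_subset_left) hO₁'val.le)
      (μ.mono_clo hD'c.isClosed hOD hD'OD)
  -- shell compact L₃ around D' inside OD
  obtain ⟨L₃, hL₃, hD'int₃, hL₃OD⟩ := exists_compact_between hD'c hOD hD'OD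
  -- a compact of full total value, and an outermost shell
  obtain ⟨F₀, hF₀, -, hF₀val⟩ := μ.attain_inner hfinval isOpen_univ
  obtain ⟨LR, hLR, hFLint, -⟩ :=
    exists_compact_between (hF₀.union hL₃) isOpen_univ (subset_univ _)
  -- the three shells
  set s₁ : Set X := L₁ \ interior L₁ with hs₁def
  set s₃ : Set X := L₃ \ interior L₃ with hs₃def
  set sR : Set X := LR \ interior LR with hsRdef
  have hs₁c : IsCompact s₁ := hL₁.diff isOpen_interior
  have hs₃c : IsCompact s₃ := hL₃.diff isOpen_interior
  have hsRc : IsCompact sR := hLR.diff isOpen_interior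
  set K : Set X := (s₁ ∪ s₃) ∪ sR with hKdef
  have hKc : IsCompact K := (hs₁c.union hs₃c).union hsRc
  -- basic inclusions
  have hL₁D' : L₁ ⊆ D' := subset_union_right
  have hL₁int₃ : L₁ ⊆ interior L₃ := hL₁D'.trans hD'int₃
  have hL₃LR : L₃ ⊆ interior LR := (subset_union_right).trans hFLint
  have hF₀LR : F₀ ⊆ interior LR := (subset_union_left).trans hFLint
  -- the shells are null
  have hns₁ : μ.m s₁ = 0 := by
    refine μ.nullIn hBc hOB hBOB hOBval hBfin hs₁c (diff_subset.trans hL₁OB) ?_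
    exact Set.disjoint_left.mpr fun {x} hx hxB => hx.2 (hBint₁ hxB)
  have hns₃ : μ.m s₃ = 0 := by
    refine μ.nullIn hD'c hOD hD'OD hODval hD'fin hs₃c (diff_subset.trans hL₃OD) ?_
    exact Set.disjoint_left.mpr fun {x} hx hxD => hx.2 (hD'int₃ hxD)
  have hF₀fin : μ.m F₀ ≠ ∞ := by rw [hF₀val]; exact hm_ne
  have hnsR : μ.m sR = 0 := by
    refine μ.nullIn hF₀ isOpen_univ (subset_univ _) hF₀val.symm hF₀fin hsRc
      (subset_univ _) ?_
    exact Set.disjoint_left.mpr fun {x} hx hxF => hx.2 (hF₀LR hxF)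
  -- K is null
  have hd13 : Disjoint s₁ s₃ :=
    Set.disjoint_left.mpr fun {x} hx hx3 => hx3.2 (hL₁int₃ hx.1)
  have hd13R : Disjoint (s₁ ∪ s₃) sR := by
    rw [Set.disjoint_left]
    rintro x (hx | hx) hxR
    · exact hxR.2 (hL₃LR (interior_subset (hL₁int₃ hx.1)))
    · exact hxR.2 (hL₃LR hx.1)
  have hK0 : μ.m K = 0 := by
    rw [hKdef, μ.additive (hs₁c.union hs₃c) hsRc hd13R,
      μ.additive hs₁c hs₃c hd13, hns₁, hns₃, hnsR]
    simp
  -- main estimate : μ (univ \ K) < μ univ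
  have hKcopen : IsOpen (univ \ K) := by
    rw [← Set.compl_eq_univ_diff]
    exact hKc.isClosed.isOpen_compl
  obtain ⟨P, hP, hPK, hPval⟩ := μ.attain_inner hfinval hKcopen
  have hPdisjK : Disjoint P K :=
    Set.disjoint_left.mpr fun {x} hxP hxK => (hPK hxP).2 hxK
  -- split P along the outer shell
  have heR : μ.m P = μ.m (P ∩ LR) + μ.m (P \ interior LR) := by
    refine μ.shell_split hP hLR (hPdisjK.mono_right ?_)
    exact subset_union_right
  have hPR0 : μ.m (P \ interior LR) = 0 := by
    refine μ.nullIn hF₀ isOpen_univ (subset_univ _) hF₀val.symm hF₀fin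
      (hP.diff isOpen_interior) (subset_univ _) ?_
    exact Set.disjoint_left.mpr fun {x} hx hxF => hx.2 (hF₀LR hxF)
  set Q : Set X := P ∩ LR with hQdef
  have hQc : IsCompact Q := hP.inter_right hLR.isClosed
  have hQP : Q ⊆ P := inter_subset_left
  -- split Q along the middle shell
  have heQ : μ.m Q = μ.m (Q ∩ L₃) + μ.m (Q \ interior L₃) := by
    refine μ.shell_split hQc hL₃ ((hPdisjK.mono_right ?_).mono_left hQP)
    exact (subset_union_right (s := s₁)).trans subset_union_left
  have hA2 : μ.m (Q \ interior L₃) + μ.m Uo ≤ μ.m univ := by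
    have hd : Disjoint (Q \ interior L₃) D' :=
      Set.disjoint_left.mpr fun {x} hx hxD => hx.2 (hD'int₃ hxD)
    calc μ.m (Q \ interior L₃) + μ.m Uo
        = μ.m (Q \ interior L₃) + μ.m D' := by rw [hD'val]
      _ = μ.m ((Q \ interior L₃) ∪ D') :=
          (μ.additive (hQc.diff isOpen_interior) hD'c hd).symm
      _ ≤ μ.m univ :=
          μ.mono_co ((hQc.diff isOpen_interior).union hD'c) isOpen_univ (subset_univ _)
  set Q₃ : Set X := Q ∩ L₃ with hQ₃def
  have hQ₃c : IsCompact Q₃ := hQc.inter_right hL₃.isClosed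
  have hQ₃P : Q₃ ⊆ P := (inter_subset_left).trans hQP
  -- split Q₃ along the inner shell
  have heQ₃ : μ.m Q₃ = μ.m (Q₃ ∩ L₁) + μ.m (Q₃ \ interior L₁) := by
    refine μ.shell_split hQ₃c hL₁ ((hPdisjK.mono_right ?_).mono_left hQ₃P)
    exact (subset_union_left (t := s₃)).trans subset_union_left
  have hA1 : μ.m (Q₃ ∩ L₁) ≤ μ.m B := by
    rw [← hOBval]
    exact μ.mono_co (hQ₃c.inter_right hL₁.isClosed) hOB (inter_subset_right.trans hL₁OB)
  have hA0 : μ.m (Q₃ \ interior L₁) = 0 := by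
    have hfinL : μ.m Lsat ≠ ∞ :=
      ((μ.mono_co hLsat isOpen_univ (subset_univ _)).trans_lt hμfin).ne
    refine μ.nullIn hLsat hWo hLsatW hLsatval.symm hfinL (hQ₃c.diff isOpen_interior)
      ?_ ?_
    · rintro x ⟨hxQ₃, hxni⟩
      refine ⟨hODU (hL₃OD hxQ₃.2), fun hxC => ?_⟩
      exact hxni (hBint₁ (Or.inl hxC))
    · rw [Set.disjoint_left]
      rintro x ⟨-, hxni⟩ hxL
      exact hxni (hBint₁ (Or.inr hxL))
  -- combine
  have hkey : μ.m (univ \ K) + μ.m Uo ≤ (μ.m Co + μ.m (Uo \ Co)) + μ.m univ := by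
    rw [← hPval, heR, hPR0, add_zero, heQ, heQ₃, hA0, add_zero, ← hBval]
    calc μ.m (Q₃ ∩ L₁) + μ.m (Q \ interior L₃) + μ.m Uo
        = μ.m (Q₃ ∩ L₁) + (μ.m (Q \ interior L₃) + μ.m Uo) := by ring
      _ ≤ μ.m B + μ.m univ := add_le_add hA1 hA2
  have hXK : μ.m (univ \ K) < μ.m univ := by
    by_contra h
    push_neg at h
    have h1 : μ.m univ + μ.m Uo ≤ (μ.m Co + μ.m (Uo \ Co)) + μ.m univ :=
      le_trans (add_le_add_left h _) hkey
    have h2 : (μ.m Co + μ.m (Uo \ Co)) + μ.m univ < μ.m Uo + μ.m univ :=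
      ENNReal.add_lt_add_right hm_ne hlt
    have h3 : μ.m univ + μ.m Uo < μ.m Uo + μ.m univ := lt_of_le_of_lt h1 h2
    rw [add_comm (μ.m Uo) (μ.m univ)] at h3
    exact (lt_irrefl _ ((ENNReal.add_lt_add_iff_left hm_ne).mp h3))
  -- K is nonempty
  have hKne : K.Nonempty := by
    rcases K.eq_empty_or_nonempty with h | h
    · exfalso
      rw [h, diff_empty] at hXK
      exact lt_irrefl _ hXK
    · exact h
  -- null open neighbourhood of K
  obtain ⟨V, hV, hKV, hVval⟩ := μ.attain_outer hfinval hKc.isClosed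
  have hV0 : μ.m V = 0 := hVval.trans hK0
  -- Urysohn function
  obtain ⟨f, hf1, hf0, hfc, hficc⟩ :=
    exists_continuous_one_zero_of_isCompact hKc hV.isClosed_compl
      (disjoint_compl_right_iff_subset.mpr hKV)
  obtain ⟨x₀, hx₀⟩ := hKne
  have : Nonempty X := ⟨x₀⟩
  have hXKfin : μ.m (univ \ K) ≠ ∞ := (hXK.trans hμfin).ne
  -- the supremum of f is 1
  have hsup : (⨆ x, (f : X → ℝ) x) = 1 := by
    have hb : BddAbove (Set.range (f : X → ℝ)) := by
      refine ⟨1, ?_⟩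
      rintro y ⟨x, rfl⟩
      exact (hficc x).2
    apply le_antisymm (ciSup_le fun x => (hficc x).2)
    calc (1 : ℝ) = f x₀ := (hf1 hx₀).symm
      _ ≤ ⨆ x, (f : X → ℝ) x := le_ciSup hb x₀
  refine ⟨(f : X → ℝ), f.continuous, hfc, fun x => (hficc x).1, ?_, ?_⟩
  · -- first quasi-integral is zero
    have hpre0 : ∀ t ∈ Ioi (0 : ℝ), μ.m ((f : X → ℝ) ⁻¹' Ioi t) = 0 := by
      intro t ht
      have hsub : (f : X → ℝ) ⁻¹' Ioi t ⊆ V := by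
        intro x hx
        by_contra hxV
        have h0 : f x = 0 := hf0 hxV
        have : (0 : ℝ) < f x := lt_trans ht hx
        rw [h0] at this
        exact lt_irrefl _ this
      have hopen : IsOpen ((f : X → ℝ) ⁻¹' Ioi t) := isOpen_Ioi.preimage f.continuous
      exact le_antisymm ((μ.mono_oo hopen hV hsub).trans hV0.le) zero_le
    rw [setLIntegral_congr_fun (f := fun t => μ.m ((f : X → ℝ) ⁻¹' Ioi t)) (g := fun _ => 0)
      measurableSet_Ioi hpre0]
    simp
  · -- second quasi-integral is negative
    rw [hsup]
    set g : ℝ → ℝ := fun t => (μ.m ((fun x => -(f : X → ℝ) x) ⁻¹' Ioi t)).toReal with hgdef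
    set c : ℝ := (μ.m (univ \ K)).toReal with hcdef
    have hpresub : ∀ t : ℝ, -1 ≤ t → ((fun x => -(f : X → ℝ) x) ⁻¹' Ioi t) ⊆ univ \ K := by
      intro t ht x hx
      refine ⟨trivial, fun hxK => ?_⟩
      have h1 : (f : X → ℝ) x = 1 := hf1 hxK
      have h2 : t < -(f : X → ℝ) x := hx
      rw [h1] at h2
      linarith
    have hpreo : ∀ t : ℝ, IsOpen ((fun x => -(f : X → ℝ) x) ⁻¹' Ioi t) :=
      fun t => isOpen_Ioi.preimage f.continuous.neg
    have hgle : ∀ t : ℝ, -1 ≤ t →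
        μ.m ((fun x => -(f : X → ℝ) x) ⁻¹' Ioi t) ≤ μ.m (univ \ K) :=
      fun t ht => μ.mono_oo (hpreo t) hKcopen (hpresub t ht)
    have huIcc : Set.uIcc (-1 : ℝ) 0 = Set.Icc (-1 : ℝ) 0 := uIcc_of_le (by norm_num)
    have hmono : AntitoneOn g (Set.uIcc (-1 : ℝ) 0) := by
      rw [huIcc]
      intro s hs t ht hst
      have hsub2 : ((fun x => -(f : X → ℝ) x) ⁻¹' Ioi t) ⊆
          ((fun x => -(f : X → ℝ) x) ⁻¹' Ioi s) := fun x hx => lt_of_le_of_lt hst hx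
      have hfin' : μ.m ((fun x => -(f : X → ℝ) x) ⁻¹' Ioi s) ≠ ∞ :=
        ne_top_of_le_ne_top hXKfin (hgle s hs.1)
      exact ENNReal.toReal_mono hfin' (μ.mono_oo (hpreo t) (hpreo s) hsub2)
    have hgint : IntervalIntegrable g volume (-1 : ℝ) 0 := hmono.intervalIntegrable
    have hbound : ∀ t ∈ Set.Icc (-1 : ℝ) 0, g t ≤ c :=
      fun t ht => ENNReal.toReal_mono hXKfin (hgle t ht.1)
    have hint_le : (∫ t in (-1 : ℝ)..0, g t) ≤ c := by
      calc (∫ t in (-1 : ℝ)..0, g t) ≤ ∫ _ in (-1 : ℝ)..0, c :=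
            intervalIntegral.integral_mono_on (by norm_num) hgint
              intervalIntegrable_const hbound
        _ = (0 - (-1 : ℝ)) • c := intervalIntegral.integral_const c
        _ = c := by norm_num
    have hclt : c < (μ.m univ).toReal :=
      (ENNReal.toReal_lt_toReal hXKfin hm_ne).mpr hXK
    have : (∫ t in (-1 : ℝ)..0, g t) < (μ.m univ).toReal := lt_of_le_of_lt hint_le hclt
    have hgoal : -(1 : ℝ) * (μ.m univ).toReal +
        (∫ t in (-1 : ℝ)..0, g t) < 0 := by linarith
    exact hgoal
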